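/- There exists a finite group G and subgroups witnessing both a split extension 1 → (Z/pZ)² → G → (Z/pZ)² → 1 and a non-split extension 1 → (Z/pZ)² → G → (Z/pZ)² → 1. Concretely, for G = (A ⋉ (B × C)) × D with A,B,C,D ≅ Z/pZ and A acting by (b,c) ↦ (b, c + kb): the normal subgroup B × C has complement A × D, but the central subgroup C × D has no complement in G. -/

import Mathlib

open SemidirectProduct Pointwise
open scoped commutatorElement

private lemma central_shuffle {G : Type*} [Group G] (z w u v : G)
    (hz : ∀ x, z * x = x * z) (hw : ∀ x, w * x = x * w) (huv : u * v = v * u) :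
    (z * u) * (w * v) = (w * v) * (z * u) := by
  have h1 : (z * u) * (w * v) = z * w * (u * v) := by
    rw [mul_assoc z u (w*v), ← mul_assoc u w v, ← hw u, mul_assoc w u v, ← mul_assoc z w (u*v)]
  have h2 : (w * v) * (z * u) = z * w * (v * u) := by
    rw [mul_assoc w v (z*u), ← mul_assoc v z u, ← hz v, mul_assoc z v u,
      ← mul_assoc w z (v*u), ← hz w]
  rw [h1, h2, huv]

/-- doc omitted -/
theorem split_and_nonsplit_extensions (p : ℕ) (hp : p.Prime)
    (φ : Multiplicative (ZMod p) →*
      MulAut (Multiplicative (ZMod p) × Multiplicative (ZMod p)))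
    (hφ : ∀ (k b c : Multiplicative (ZMod p)),
      φ k (b, c) = (b, Multiplicative.ofAdd (c.toAdd + k.toAdd * b.toAdd))) :
    letI G := ((Multiplicative (ZMod p) × Multiplicative (ZMod p)) ⋊[φ]
        Multiplicative (ZMod p)) × Multiplicative (ZMod p)
    letI N : Subgroup G :=
      (SemidirectProduct.inl.range).prod (⊥ : Subgroup (Multiplicative (ZMod p)))
    letI CD : Subgroup G :=
      (((⊥ : Subgroup (Multiplicative (ZMod p))).prod ⊤).map
          SemidirectProduct.inl).prod (⊤ : Subgroup (Multiplicative (ZMod p)))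
    N.Normal ∧
    Nonempty (N ≃* Multiplicative (ZMod p) × Multiplicative (ZMod p)) ∧
    (∃ f : G →* Multiplicative (ZMod p) × Multiplicative (ZMod p),
      Function.Surjective f ∧ f.ker = N) ∧
    (∃ Q : Subgroup G, N ⊔ Q = ⊤ ∧ N ⊓ Q = ⊥) ∧
    CD.Normal ∧
    Nonempty (CD ≃* Multiplicative (ZMod p) × Multiplicative (ZMod p)) ∧
    (∃ f : G →* Multiplicative (ZMod p) × Multiplicative (ZMod p),
      Function.Surjective f ∧ f.ker = CD) ∧
    ¬ ∃ Q : Subgroup G, CD ⊔ Q = ⊤ ∧ CD ⊓ Q = ⊥ := by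
  haveI : Fact p.Prime := ⟨hp⟩
  set M := Multiplicative (ZMod p) with hM
  set G := ((M × M) ⋊[φ] M) × M with hG
  set N : Subgroup G := (SemidirectProduct.inl.range).prod (⊥ : Subgroup M) with hN
  set CD : Subgroup G :=
    (((⊥ : Subgroup M).prod ⊤).map SemidirectProduct.inl).prod (⊤ : Subgroup M) with hCD
  -- the first projection-with-twist homomorphism, killing C and D
  have hφfst : ∀ (k : M) (x : M × M), (φ k x).1 = x.1 := by
    intro k x
    have := hφ k x.1 x.2
    rw [show (x.1, x.2) = x from rfl] at this
    rw [this]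
  let f₂ : G →* M × M :=
  { toFun := fun g => (g.1.left.1, g.1.right)
    map_one' := rfl
    map_mul' := by
      intro g h
      have h1 : (g.1 * h.1).left = g.1.left * φ g.1.right h.1.left := rfl
      have h2 : (g.1 * h.1).right = g.1.right * h.1.right := rfl
      show ((g.1 * h.1).left.1, (g.1 * h.1).right) = _
      rw [h1, h2]
      ext <;> simp [hφfst] }
  -- kernel of f₂ is CD
  have hker₂ : f₂.ker = CD := by
    ext g
    constructor
    · intro hg
      have hg' : f₂ g = 1 := hg
      have hl : g.1.left.1 = 1 := congrArg Prod.fst hg'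
      have hr : g.1.right = 1 := congrArg Prod.snd hg'
      refine Subgroup.mem_prod.2 ⟨Subgroup.mem_map.2 ⟨(1, g.1.left.2),
        Subgroup.mem_prod.2 ⟨Subgroup.mem_bot.2 rfl, trivial⟩, ?_⟩, trivial⟩
      apply SemidirectProduct.ext
      · exact Prod.ext hl.symm rfl
      · exact hr.symm
    · intro hg
      obtain ⟨h1, _⟩ := Subgroup.mem_prod.1 hg
      obtain ⟨y, hy1, hy⟩ := Subgroup.mem_map.1 h1
      obtain ⟨hy2, _⟩ := Subgroup.mem_prod.1 hy1
      have hy2' : y.1 = 1 := Subgroup.mem_bot.1 hy2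
      have e1 : g.1.left.1 = 1 := by rw [← hy]; exact hy2'
      have e2 : g.1.right = 1 := by rw [← hy]; rfl
      show (g.1.left.1, g.1.right) = (1 : M × M)
      rw [e1, e2]; rfl
  have hCDnormal : CD.Normal := hker₂ ▸ f₂.normal_ker
  -- CD is central
  have hcentral : ∀ x ∈ CD, ∀ g : G, x * g = g * x := by
    rintro ⟨xs, xd⟩ hx ⟨gs, gd⟩
    obtain ⟨h1, _⟩ := Subgroup.mem_prod.1 hx
    obtain ⟨y, hy1', hy⟩ := Subgroup.mem_map.1 h1
    obtain ⟨hy1a, _⟩ := Subgroup.mem_prod.1 hy1'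
    have hy1 : y.1 = 1 := Subgroup.mem_bot.1 hy1a
    have hy' : inl y = xs := hy
    have hxs : xs = inl (1, y.2) := by
      rw [← hy']; congr 1; exact Prod.ext hy1 rfl
    have key : inl ((1 : M), y.2) * gs = gs * inl ((1 : M), y.2) := by
      apply SemidirectProduct.ext
      · show ((1 : M), y.2) * φ (1 : M) gs.left = gs.left * φ gs.right ((1 : M), y.2)
        rw [map_one]
        have : φ gs.right ((1 : M), y.2) = ((1 : M), y.2) := by
          rw [hφ]
          simp
        rw [this]
        show ((1:M), y.2) * gs.left = gs.left * ((1:M), y.2)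
        exact mul_comm _ _
      · show (1 : M) * gs.right = gs.right * 1
        rw [one_mul, mul_one]
    show ((xs * gs : (M × M) ⋊[φ] M), xd * gd) = ((gs * xs : (M × M) ⋊[φ] M), gd * xd)
    refine Prod.ext ?_ (mul_comm _ _)
    show xs * gs = gs * xs
    rw [hxs]; exact key
  refine ⟨?_, ?_, ?_, ?_, hCDnormal, ?_, ?_, ?_⟩
  · -- N normal
    have : N = (SemidirectProduct.rightHom.prodMap (MonoidHom.id M)).ker := by
      rw [MonoidHom.ker_prodMap, MonoidHom.ker_id, ← range_inl_eq_ker_rightHom, hN]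
    rw [this]; exact MonoidHom.normal_ker _
  · -- N ≃* M × M
    exact ⟨(Subgroup.prodEquiv _ _).trans ((MulEquiv.prodUnique).trans
      (MonoidHom.ofInjective inl_injective).symm)⟩
  · -- surjection with kernel N
    refine ⟨(SemidirectProduct.rightHom.prodMap (MonoidHom.id M)), ?_, ?_⟩
    · exact Function.Surjective.prodMap rightHom_surjective Function.surjective_id
    · rw [MonoidHom.ker_prodMap, MonoidHom.ker_id, ← range_inl_eq_ker_rightHom, hN]
  · -- complement of N
    refine ⟨(SemidirectProduct.inr.range).prod ⊤, ?_, ?_⟩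
    · rw [eq_top_iff]
      rintro ⟨x, d⟩ _
      have hdecomp : ((x, d) : G) = (inl x.left, 1) * (inr x.right, d) := by
        refine Prod.ext ?_ ?_
        · exact (inl_left_mul_inr_right x).symm
        · exact (one_mul d).symm
      rw [hdecomp]
      exact mul_mem
        (Subgroup.mem_sup_left (Subgroup.mem_prod.2 ⟨⟨x.left, rfl⟩, Subgroup.mem_bot.2 rfl⟩))
        (Subgroup.mem_sup_right (Subgroup.mem_prod.2 ⟨⟨x.right, rfl⟩, trivial⟩))
    · rw [eq_bot_iff]
      rintro ⟨x, d⟩ ⟨hN, hQ⟩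
      obtain ⟨⟨n, hn⟩, hd⟩ := Subgroup.mem_prod.1 hN
      obtain ⟨⟨a, ha⟩, _⟩ := Subgroup.mem_prod.1 hQ
      have hd' : d = 1 := Subgroup.mem_bot.1 hd
      have hn' : inl n = x := hn
      have ha' : inr a = x := ha
      have hxr : x.right = 1 := by rw [← hn']; exact right_inl n
      have hxl : x.left = 1 := by rw [← ha']; exact left_inr a
      rw [Subgroup.mem_bot]
      refine Prod.ext ?_ hd'
      show x = 1
      apply SemidirectProduct.ext <;> simp [hxr, hxl]
  · -- CD ≃* M × M
    refine ⟨(Subgroup.prodEquiv _ _).trans (MulEquiv.prodCongr ?_ Subgroup.topEquiv)⟩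
    exact ((Subgroup.equivMapOfInjective _ _ inl_injective).symm).trans
      ((Subgroup.prodEquiv _ _).trans ((MulEquiv.uniqueProd).trans Subgroup.topEquiv))
  · -- surjection with kernel CD
    refine ⟨f₂, ?_, hker₂⟩
    rintro ⟨m₁, m₂⟩
    exact ⟨((⟨(m₁, 1), m₂⟩ : (M × M) ⋊[φ] M), 1), rfl⟩
  · -- no complement for CD
    rintro ⟨Q, hsup, hinf⟩
    haveI := hCDnormal
    -- decompose the two generators
    have hdec : ∀ g : G, ∃ c ∈ CD, ∃ q ∈ Q, c * q = g := by
      intro g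
      have : g ∈ ((CD : Set G) * (Q : Set G)) := by
        have h := Subgroup.normal_mul CD Q
        rw [hsup] at h
        rw [← h]
        trivial
      obtain ⟨c, hc, q, hq, h⟩ := this
      exact ⟨c, hc, q, hq, h⟩
    set g0 : G := (inr (Multiplicative.ofAdd (1 : ZMod p)), 1) with hg0
    set h0 : G := (inl ((Multiplicative.ofAdd (1 : ZMod p)), 1), 1) with hh0
    obtain ⟨c, hc, q, hq, hcq⟩ := hdec g0
    obtain ⟨c', hc', q', hq', hcq'⟩ := hdec h0
    -- the commutator of q and q' is trivial
    have hqq' : q * q' = q' * q := by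
      have hcomm_mem : ⁅q, q'⁆ ∈ CD := by
        rw [← hker₂, MonoidHom.mem_ker]
        simp only [commutatorElement_def, map_mul, map_inv]
        rw [mul_comm (f₂ q) (f₂ q')]
        group
      have hQmem : ⁅q, q'⁆ ∈ Q := by
        exact mul_mem (mul_mem (mul_mem hq hq') (inv_mem hq)) (inv_mem hq')
      have : ⁅q, q'⁆ ∈ CD ⊓ Q := ⟨hcomm_mem, hQmem⟩
      rw [hinf, Subgroup.mem_bot] at this
      exact (commutatorElement_eq_one_iff_commute.1 this).eq
    have hcen : ∀ x, c * x = x * c := fun x => hcentral c hc x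
    have hcen' : ∀ x, c' * x = x * c' := fun x => hcentral c' hc' x
    have hcomm : g0 * h0 = h0 * g0 := by
      rw [← hcq, ← hcq']
      exact central_shuffle c c' q q' hcen hcen' hqq'
    -- but g0 and h0 do not commute
    have h1 : (g0 * h0).1.left.2 = Multiplicative.ofAdd (1 : ZMod p) := by
      show ((inr (Multiplicative.ofAdd (1:ZMod p)) : (M × M) ⋊[φ] M) *
        inl ((Multiplicative.ofAdd (1 : ZMod p)), 1)).left.2 = _
      show ((1 : M × M) * φ (Multiplicative.ofAdd (1:ZMod p))
        ((Multiplicative.ofAdd (1 : ZMod p)), 1)).2 = _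
      rw [one_mul, hφ]
      simp
    have h2 : (h0 * g0).1.left.2 = (1 : M) := by
      show ((inl ((Multiplicative.ofAdd (1 : ZMod p)), 1) : (M × M) ⋊[φ] M) *
        inr (Multiplicative.ofAdd (1:ZMod p))).left.2 = _
      show (((Multiplicative.ofAdd (1 : ZMod p)), (1:M)) * φ (1 : M) (1 : M × M)).2 = _
      simp
    rw [hcomm, h2] at h1
    have h1' : Multiplicative.toAdd (1 : M) =
        Multiplicative.toAdd (Multiplicative.ofAdd (1 : ZMod p)) :=
      congrArg Multiplicative.toAdd h1
    rw [toAdd_one, toAdd_ofAdd] at h1'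
    exact one_ne_zero h1'.symm
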